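/- There exists a sequence of nontrivial words ω_n in the free group F₂ with len(ω_n) = O(2ⁿ) and nil(ω_n) ≥ f_n (the n-th Fibonacci number). Consequently, the exponent λ = lim_{n→∞} (log ℓ_{2,n})/(log n), where ℓ_{2,n} is the minimal length of a word in the n-th lower central term of F₂, satisfies λ ≤ log_φ 2, where φ = (1+√5)/2. -/

import Mathlib

open Filter
open scoped commutatorElement

section Construction

open FreeGroup

abbrev Ltr := Fin 2 × Bool

/-- non-cancelling adjacency: if same generator then same sign. -/
def RR (p q : Ltr) : Prop := p.1 = q.1 → p.2 = q.2

instance : DecidableRel RR := fun p q =>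
  inferInstanceAs (Decidable (p.1 = q.1 → p.2 = q.2))

/-- letter inversion -/
def sig (p : Ltr) : Ltr := (p.1, !p.2)

/-- The Fibonacci-commutator word scheme: `A₀ = [x]`, `B₀ = [y]`,
`A_{n+1} = Aₙ ++ Bₙ`, `B_{n+1} = inv(Aₙ) ++ inv(Bₙ)`. -/
def AB : ℕ → List Ltr × List Ltr
  | 0 => ([((0 : Fin 2), true)], [((1 : Fin 2), true)])
  | n + 1 => ((AB n).1 ++ (AB n).2, invRev (AB n).1 ++ invRev (AB n).2)

def zw (n : ℕ) : List Ltr := (AB n).1 ++ (AB n).2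

lemma length_AB (n : ℕ) : (AB n).1.length = 2 ^ n ∧ (AB n).2.length = 2 ^ n := by
  induction n with
  | zero => simp [AB]
  | succ n ih =>
    simp only [AB, List.length_append, invRev_length, ih.1, ih.2]
    constructor <;> ring

lemma length_zw (n : ℕ) : (zw n).length = 2 ^ (n + 1) := by
  simp only [zw, List.length_append, (length_AB n).1, (length_AB n).2]
  ring

lemma invRev_eq_map_reverse (L : List Ltr) : invRev L = L.reverse.map sig := by
  simp [invRev, sig, List.map_reverse]

lemma head?_invRev (L : List Ltr) : (invRev L).head? = L.getLast?.map sig := by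
  rw [invRev_eq_map_reverse, List.head?_map, List.head?_reverse]

lemma getLast?_invRev (L : List Ltr) : (invRev L).getLast? = L.head?.map sig := by
  rw [invRev_eq_map_reverse]
  rw [List.getLast?_map, List.getLast?_reverse]

lemma chain'_invRev {L : List Ltr} (h : List.Chain' RR L) :
    List.Chain' RR (invRev L) := by
  unfold List.Chain' at h ⊢
  rw [invRev_eq_map_reverse, List.isChain_map, List.isChain_reverse]
  refine h.imp ?_
  rintro a b hab
  show RR (sig b) (sig a)
  intro h1
  have := hab h1.symm
  simp [sig, this]

/-- the abstract boundary-letter invariant -/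
def Good (A B : List Ltr) : Prop :=
  List.Chain' RR (A ++ B) ∧
  ((A.head? = some (0, true) ∧ A.getLast? = some (0, true) ∧
      B.head? = some (1, true) ∧ B.getLast? = some (1, true)) ∨
   (A.head? = some (0, true) ∧ A.getLast? = some (1, true) ∧
      B.head? = some (0, false) ∧ B.getLast? = some (1, false)) ∨
   (A.head? = some (0, true) ∧ A.getLast? = some (1, false) ∧
      B.head? = some (1, false) ∧ B.getLast? = some (0, true)))

lemma ne_nil_of_head?_eq_some {L : List Ltr} {a : Ltr} (h : L.head? = some a) :
    L ≠ [] := by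
  intro hL; subst hL; simp at h

lemma good_step {A B : List Ltr} (h : Good A B) :
    Good (A ++ B) (invRev A ++ invRev B) := by
  obtain ⟨hred, hq⟩ := h
  -- names of boundary letters
  obtain ⟨fA, lA, fB, lB, hfA, hlA, hfB, hlB⟩ :
      ∃ fA lA fB lB, A.head? = some fA ∧ A.getLast? = some lA ∧
        B.head? = some fB ∧ B.getLast? = some lB := by
    rcases hq with ⟨h1, h2, h3, h4⟩ | ⟨h1, h2, h3, h4⟩ | ⟨h1, h2, h3, h4⟩ <;>
      exact ⟨_, _, _, _, h1, h2, h3, h4⟩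
  have hAne : A ≠ [] := ne_nil_of_head?_eq_some hfA
  have hBne : B ≠ [] := ne_nil_of_head?_eq_some hfB
  have hiAne : invRev A ≠ [] := by
    intro hc
    have := congrArg List.length hc
    simp only [invRev_length, List.length_nil] at this
    exact hAne (List.length_eq_zero_iff.mp this)
  have hiBne : invRev B ≠ [] := by
    intro hc
    have := congrArg List.length hc
    simp only [invRev_length, List.length_nil] at this
    exact hBne (List.length_eq_zero_iff.mp this)
  have hA : List.Chain' RR A := (List.isChain_append.mp hred).1
  have hB : List.Chain' RR B := (List.isChain_append.mp hred).2.1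
  -- letter facts needed
  have key1 : RR lB (sig lA) ∧ RR (sig fA) (sig lB) := by
    rcases hq with ⟨h1, h2, h3, h4⟩ | ⟨h1, h2, h3, h4⟩ | ⟨h1, h2, h3, h4⟩ <;>
    · rw [hfA] at h1; rw [hlA] at h2; rw [hfB] at h3; rw [hlB] at h4
      injection h1 with h1; injection h2 with h2; injection h3 with h3; injection h4 with h4
      subst h1; subst h2; subst h3; subst h4
      exact ⟨by decide, by decide⟩
  constructor
  · -- reducedness of the new word
    unfold List.Chain'
    rw [List.isChain_append]
    refine ⟨hred, ?_, ?_⟩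
    · rw [List.isChain_append]
      refine ⟨chain'_invRev hA, chain'_invRev hB, ?_⟩
      intro p hp q hq'
      rw [getLast?_invRev, hfA] at hp
      rw [head?_invRev, hlB] at hq'
      simp only [Option.map_some, Option.mem_def, Option.some.injEq] at hp hq'
      subst hp; subst hq'
      exact key1.2
    · intro p hp q hq'
      rw [List.getLast?_append_of_ne_nil _ hBne, hlB] at hp
      rw [List.head?_append_of_ne_nil _ hiAne, head?_invRev, hlA] at hq'
      simp only [Option.map_some, Option.mem_def, Option.some.injEq] at hp hq'
      subst hp; subst hq'
      exact key1.1
  · -- the new boundary letters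
    have e1 : (A ++ B).head? = some fA := by
      rw [List.head?_append_of_ne_nil _ hAne, hfA]
    have e2 : (A ++ B).getLast? = some lB := by
      rw [List.getLast?_append_of_ne_nil _ hBne, hlB]
    have e3 : (invRev A ++ invRev B).head? = some (sig lA) := by
      rw [List.head?_append_of_ne_nil _ hiAne, head?_invRev, hlA]; rfl
    have e4 : (invRev A ++ invRev B).getLast? = some (sig fB) := by
      rw [List.getLast?_append_of_ne_nil _ hiBne, getLast?_invRev, hfB]; rfl
    rw [e1, e2, e3, e4]
    rcases hq with ⟨h1, h2, h3, h4⟩ | ⟨h1, h2, h3, h4⟩ | ⟨h1, h2, h3, h4⟩ <;>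
    · rw [hfA] at h1; rw [hlA] at h2; rw [hfB] at h3; rw [hlB] at h4
      injection h1 with h1; injection h2 with h2; injection h3 with h3; injection h4 with h4
      subst h1; subst h2; subst h3; subst h4
      decide
  done

lemma good_AB (n : ℕ) : Good (AB n).1 (AB n).2 := by
  induction n with
  | zero =>
    constructor
    · exact List.isChain_pair.mpr (by decide)
    · left; exact ⟨rfl, rfl, rfl, rfl⟩
  | succ n ih => exact good_step ih

lemma chain'_zw (n : ℕ) : List.Chain' RR (zw n) := (good_AB n).1

lemma reduce_eq_self : ∀ {L : List Ltr}, List.Chain' RR L → FreeGroup.reduce L = L := by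
  intro L h
  induction L with
  | nil => rfl
  | cons x L ih =>
    have hL : List.Chain' RR L := h.tail
    rw [FreeGroup.reduce.cons, ih hL]
    cases L with
    | nil => rfl
    | cons y L' =>
      have hxy : RR x y := (List.isChain_cons_cons.mp h).1
      have hne : ¬(x.1 = y.1 ∧ x.2 = !y.2) := by
        rintro ⟨h1, h2⟩
        have h3 := hxy h1
        rw [h3] at h2
        simp at h2
      simp only [hne, if_false]

lemma toWord_mk_zw (n : ℕ) : (FreeGroup.mk (zw n)).toWord = zw n := by
  rw [FreeGroup.toWord_mk, reduce_eq_self (chain'_zw n)]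

lemma mk_zw_ne_one (n : ℕ) : FreeGroup.mk (zw n) ≠ 1 := by
  intro h
  have h2 := toWord_mk_zw n
  rw [h, FreeGroup.toWord_one] at h2
  have h3 : (zw n).length = 0 := by rw [← h2]; rfl
  rw [length_zw] at h3
  exact pow_ne_zero (n + 1) two_ne_zero h3

lemma norm_mk_zw (n : ℕ) : (FreeGroup.mk (zw n)).norm ≤ 2 ^ (n + 1) := by
  calc (FreeGroup.mk (zw n)).norm ≤ (zw n).length := FreeGroup.norm_mk_le
    _ = 2 ^ (n + 1) := length_zw n

lemma mk_zw_succ (n : ℕ) :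
    FreeGroup.mk (zw (n + 1)) = ⁅FreeGroup.mk (zw n), (FreeGroup.mk (AB n).1)⁻¹⁆ := by
  have hz : zw (n + 1) = ((AB n).1 ++ (AB n).2) ++ (invRev (AB n).1 ++ invRev (AB n).2) := rfl
  have hmk : FreeGroup.mk (zw (n + 1)) =
      FreeGroup.mk (AB n).1 * FreeGroup.mk (AB n).2 *
        ((FreeGroup.mk (AB n).1)⁻¹ * (FreeGroup.mk (AB n).2)⁻¹) := by
    rw [hz, FreeGroup.inv_mk, FreeGroup.inv_mk, FreeGroup.mul_mk, FreeGroup.mul_mk,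
      FreeGroup.mul_mk]
  have hw : FreeGroup.mk (zw n) = FreeGroup.mk (AB n).1 * FreeGroup.mk (AB n).2 := by
    rw [FreeGroup.mul_mk]; rfl
  rw [hmk, hw, commutatorElement_def]
  group

end Construction

section LCS

variable {G : Type*} [Group G]

/-- `⁅γ_i, γ_j⁆ ≤ γ_{i+j+1}` (0-indexed lower central series). -/
theorem lcs_commutator_le :
    ∀ (j i : ℕ), ⁅(⊤ : Subgroup G).lowerCentralSeries i, (⊤ : Subgroup G).lowerCentralSeries j⁆ ≤
      (⊤ : Subgroup G).lowerCentralSeries (i + j + 1)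
  | 0, i => by
    rw [lowerCentralSeries_zero]
    exact le_of_eq (lowerCentralSeries_succ _ i).symm
  | (j + 1), i => by
    have hdef : (⊤ : Subgroup G).lowerCentralSeries (j + 1) = ⁅(⊤ : Subgroup G).lowerCentralSeries j, ⊤⁆ := rfl
    rw [hdef, Subgroup.commutator_comm]
    set N := (⊤ : Subgroup G).lowerCentralSeries (i + (j + 1) + 1) with hNdef
    let φ := QuotientGroup.mk' N
    have hker : φ.ker = N := QuotientGroup.ker_mk' N
    rw [← hker, ← Subgroup.map_eq_bot_iff, Subgroup.map_commutator, Subgroup.map_commutator]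
    apply Subgroup.commutator_commutator_eq_bot_of_rotate
    · -- ⁅⁅map ⊤, map γ_i⁆, map γ_j⁆ = ⊥
      rw [← Subgroup.map_commutator, ← Subgroup.map_commutator,
        Subgroup.map_eq_bot_iff, hker]
      calc ⁅⁅(⊤ : Subgroup G), (⊤ : Subgroup G).lowerCentralSeries i⁆, (⊤ : Subgroup G).lowerCentralSeries j⁆
          = ⁅⁅(⊤ : Subgroup G).lowerCentralSeries i, (⊤ : Subgroup G)⁆, (⊤ : Subgroup G).lowerCentralSeries j⁆ := by
            rw [Subgroup.commutator_comm (⊤ : Subgroup G)]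
        _ = ⁅(⊤ : Subgroup G).lowerCentralSeries (i + 1), (⊤ : Subgroup G).lowerCentralSeries j⁆ := rfl
        _ ≤ (⊤ : Subgroup G).lowerCentralSeries ((i + 1) + j + 1) := lcs_commutator_le j (i + 1)
        _ = N := by rw [hNdef]; congr 1; all_goals omega
    · -- ⁅⁅map γ_i, map γ_j⁆, map ⊤⁆ = ⊥
      rw [← Subgroup.map_commutator, ← Subgroup.map_commutator,
        Subgroup.map_eq_bot_iff, hker]
      calc ⁅⁅(⊤ : Subgroup G).lowerCentralSeries i, (⊤ : Subgroup G).lowerCentralSeries j⁆, (⊤ : Subgroup G)⁆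
          ≤ ⁅(⊤ : Subgroup G).lowerCentralSeries (i + j + 1), (⊤ : Subgroup G)⁆ :=
            Subgroup.commutator_mono (lcs_commutator_le j i) le_rfl
        _ = (⊤ : Subgroup G).lowerCentralSeries (i + j + 2) := rfl
        _ = N := by rw [hNdef]; congr 1; all_goals omega

end LCS

section Membership

lemma mem_lcs_zw (n : ℕ) :
    FreeGroup.mk (zw n) ∈
        (⊤ : Subgroup (FreeGroup (Fin 2))).lowerCentralSeries (Nat.fib (n + 1) - 1) ∧
      FreeGroup.mk (AB n).1 ∈
        (⊤ : Subgroup (FreeGroup (Fin 2))).lowerCentralSeries (Nat.fib n - 1) := by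
  induction n with
  | zero =>
    have h0 : Nat.fib 1 - 1 = 0 := by norm_num
    have h0' : Nat.fib 0 - 1 = 0 := by norm_num
    rw [h0, h0']
    exact ⟨Subgroup.mem_top _, Subgroup.mem_top _⟩
  | succ n ih =>
    obtain ⟨h1, h2⟩ := ih
    have hA : FreeGroup.mk (AB (n + 1)).1 ∈
        (⊤ : Subgroup (FreeGroup (Fin 2))).lowerCentralSeries (Nat.fib (n + 1) - 1) := by
      have : (AB (n + 1)).1 = zw n := rfl
      rw [this]; exact h1
    refine ⟨?_, hA⟩
    rw [mk_zw_succ n]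
    have hmem : ⁅FreeGroup.mk (zw n), (FreeGroup.mk (AB n).1)⁻¹⁆ ∈
        ⁅(⊤ : Subgroup (FreeGroup (Fin 2))).lowerCentralSeries (Nat.fib (n + 1) - 1),
          (⊤ : Subgroup (FreeGroup (Fin 2))).lowerCentralSeries (Nat.fib n - 1)⁆ :=
      Subgroup.commutator_mem_commutator h1 (Subgroup.inv_mem _ h2)
    have hle := lcs_commutator_le (G := FreeGroup (Fin 2)) (Nat.fib n - 1) (Nat.fib (n + 1) - 1)
    have hidx : Nat.fib (n + 2) - 1 ≤ (Nat.fib (n + 1) - 1) + (Nat.fib n - 1) + 1 := by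
      have hadd : Nat.fib (n + 2) = Nat.fib n + Nat.fib (n + 1) := Nat.fib_add_two
      have hpos : 1 ≤ Nat.fib (n + 1) := Nat.fib_pos.mpr (Nat.succ_pos n)
      omega
    exact lowerCentralSeries_antitone _ hidx (hle hmem)

end Membership

section Analysis

open Real goldenRatio

lemma log_fib_ge (n : ℕ) :
    ((n : ℝ) - 2) * Real.log ((1 + Real.sqrt 5) / 2) ≤ Real.log (Nat.fib n) := by
  show ((n : ℝ) - 2) * Real.log goldenRatio ≤ Real.log (Nat.fib n)
  have hφ : (1 : ℝ) < goldenRatio := one_lt_goldenRatio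
  have hφpos : (0 : ℝ) < goldenRatio := goldenRatio_pos
  have hlogφ : 0 < Real.log goldenRatio := Real.log_pos hφ
  cases n with
  | zero =>
    simp only [Nat.cast_zero, Nat.fib_zero, Real.log_zero, zero_sub]
    nlinarith [hlogφ]
  | succ m =>
    have hkey : goldenRatio ^ (m + 1) ≤ goldenRatio ^ 2 * Nat.fib (m + 1) := by
      have h1 := goldenRatio_mul_fib_succ_add_fib m
      have h2 : (Nat.fib m : ℝ) ≤ (Nat.fib (m + 1) : ℝ) := by
        exact_mod_cast Nat.fib_le_fib_succ
      have h3 : goldenRatio ^ 2 = goldenRatio + 1 := goldenRatio_sq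
      nlinarith [h1, h2, h3]
    have hfibpos : (0 : ℝ) < (Nat.fib (m + 1) : ℝ) := by
      exact_mod_cast Nat.fib_pos.mpr (Nat.succ_pos m)
    have hlog := Real.log_le_log (by positivity) hkey
    rw [Real.log_pow, Real.log_mul (by positivity) (ne_of_gt hfibpos), Real.log_pow] at hlog
    push_cast at hlog ⊢
    linarith

end Analysis

/-- `ℓ_{2,n}`: the minimal reduced word length of a nontrivial element of the
`n`-th (paper-indexed) lower central series term of the free group `F₂`. -/
noncomputable def minLenLCS (n : ℕ) : ℕ :=
  sInf {m : ℕ | ∃ w : FreeGroup (Fin 2),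
    w ∈ (⊤ : Subgroup (FreeGroup (Fin 2))).lowerCentralSeries (n - 1) ∧ w ≠ 1 ∧ w.norm = m}

/-- There is a sequence of nontrivial words `ω_n ∈ F₂` with `len(ω_n) = O(2ⁿ)`
and nilpotence degree at least the `n`-th Fibonacci number; consequently the
exponent `λ = lim (log ℓ_{2,n})/(log n)` satisfies `λ ≤ log_φ 2` with
`φ = (1+√5)/2`  (the limit is expressed via the hypothesis that the limit
exists and equals `l`). -/
theorem elkasapy_lambda_le :
    (∃ ω : ℕ → FreeGroup (Fin 2), (∀ n ≥ 1, ω n ≠ 1) ∧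
      (∃ C : ℕ, ∀ n ≥ 1, (ω n).norm ≤ C * 2 ^ n) ∧
      (∀ n ≥ 1, ω n ∈
        (⊤ : Subgroup (FreeGroup (Fin 2))).lowerCentralSeries (Nat.fib n - 1))) ∧
    ∀ l : ℝ, Tendsto (fun n : ℕ => Real.log (minLenLCS n) / Real.log n)
        atTop (nhds l) →
      l ≤ Real.log 2 / Real.log ((1 + Real.sqrt 5) / 2) := by
  constructor
  · -- the construction
    refine ⟨fun n => FreeGroup.mk (zw (n - 1)), ?_, ⟨1, ?_⟩, ?_⟩
    · intro n _; exact mk_zw_ne_one (n - 1)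
    · intro n hn
      have h := norm_mk_zw (n - 1)
      rw [Nat.sub_add_cancel hn] at h
      simpa using h
    · intro n hn
      have := (mem_lcs_zw (n - 1)).1
      rwa [Nat.sub_add_cancel hn] at this
  · -- the analytic consequence
    intro l hl
    have hφ : (1 : ℝ) < (1 + Real.sqrt 5) / 2 := Real.one_lt_goldenRatio
    have hlogφ : 0 < Real.log ((1 + Real.sqrt 5) / 2) := Real.log_pos hφ
    have hlog2 : 0 < Real.log 2 := Real.log_pos one_lt_two
    -- the subsequence along Fibonacci numbers
    have hfib : Tendsto (fun n => Nat.fib n) atTop atTop := by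
      apply tendsto_atTop_atTop_of_monotone Nat.fib_mono
      intro b
      refine ⟨max 5 b, le_trans (le_max_right 5 b) (Nat.le_fib_self (le_max_left 5 b))⟩
    have hcomp : Tendsto
        (fun n : ℕ => Real.log (minLenLCS (Nat.fib n)) / Real.log (Nat.fib n))
        atTop (nhds l) := hl.comp hfib
    -- the dominating sequence
    set u : ℕ → ℝ := fun n =>
      ((n : ℝ) * Real.log 2) / (((n : ℝ) - 2) * Real.log ((1 + Real.sqrt 5) / 2)) with hu
    have hminle : ∀ n : ℕ, 1 ≤ n → minLenLCS (Nat.fib n) ≤ 2 ^ n := by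
      intro n hn
      have hmem : (FreeGroup.mk (zw (n - 1))).norm ∈
          {m : ℕ | ∃ w : FreeGroup (Fin 2),
            w ∈ (⊤ : Subgroup (FreeGroup (Fin 2))).lowerCentralSeries (Nat.fib n - 1) ∧
              w ≠ 1 ∧ w.norm = m} := by
        refine ⟨FreeGroup.mk (zw (n - 1)), ?_, mk_zw_ne_one _, rfl⟩
        have := (mem_lcs_zw (n - 1)).1
        rwa [Nat.sub_add_cancel hn] at this
      calc minLenLCS (Nat.fib n) ≤ (FreeGroup.mk (zw (n - 1))).norm := Nat.sInf_le hmem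
        _ ≤ 2 ^ ((n - 1) + 1) := norm_mk_zw (n - 1)
        _ = 2 ^ n := by rw [Nat.sub_add_cancel hn]
    have hbound : ∀ᶠ n : ℕ in atTop,
        Real.log (minLenLCS (Nat.fib n)) / Real.log (Nat.fib n) ≤ u n := by
      filter_upwards [eventually_ge_atTop 3] with n hn
      have hn1 : 1 ≤ n := le_trans (by norm_num) hn
      -- numerator bound
      have hnum : Real.log (minLenLCS (Nat.fib n)) ≤ (n : ℝ) * Real.log 2 := by
        rcases Nat.eq_zero_or_pos (minLenLCS (Nat.fib n)) with h0 | hpos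
        · rw [h0]
          simp only [Nat.cast_zero, Real.log_zero]
          positivity
        · have hle : ((minLenLCS (Nat.fib n) : ℝ)) ≤ (2 : ℝ) ^ n := by
            exact_mod_cast hminle n hn1
          calc Real.log (minLenLCS (Nat.fib n)) ≤ Real.log ((2 : ℝ) ^ n) :=
              Real.log_le_log (by exact_mod_cast hpos) hle
            _ = (n : ℝ) * Real.log 2 := by rw [Real.log_pow]
      have hnumnn : 0 ≤ (n : ℝ) * Real.log 2 := by positivity
      -- denominator bound
      have hden : ((n : ℝ) - 2) * Real.log ((1 + Real.sqrt 5) / 2) ≤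
          Real.log (Nat.fib n) := log_fib_ge n
      have hdpos : 0 < ((n : ℝ) - 2) * Real.log ((1 + Real.sqrt 5) / 2) := by
        have : (3 : ℝ) ≤ (n : ℝ) := by exact_mod_cast hn
        have : (1 : ℝ) ≤ (n : ℝ) - 2 := by linarith
        nlinarith [hlogφ]
      exact div_le_div₀ hnumnn hnum hdpos hden
    -- limit of the dominating sequence
    have hulim : Tendsto u atTop
        (nhds (Real.log 2 / Real.log ((1 + Real.sqrt 5) / 2))) := by
      have h1 : Tendsto (fun n : ℕ => (n : ℝ) / ((n : ℝ) - 2)) atTop (nhds 1) := by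
        have h2 : Tendsto (fun n : ℕ => 2 / ((n : ℝ) - 2)) atTop (nhds 0) := by
          apply Tendsto.div_atTop tendsto_const_nhds
          exact tendsto_atTop_add_const_right atTop (-2) tendsto_natCast_atTop_atTop
        have h3 : Tendsto (fun n : ℕ => 1 + 2 / ((n : ℝ) - 2)) atTop (nhds 1) := by
          have h2' := h2.const_add (1 : ℝ)
          rwa [add_zero] at h2'
        apply h3.congr'
        filter_upwards [eventually_ge_atTop 3] with n hn
        have h3n : (3 : ℝ) ≤ (n : ℝ) := by exact_mod_cast hn
        have hne : (n : ℝ) - 2 ≠ 0 := by linarith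
        field_simp
        ring
      have h4 : Tendsto (fun n : ℕ =>
          (Real.log 2 / Real.log ((1 + Real.sqrt 5) / 2)) * ((n : ℝ) / ((n : ℝ) - 2)))
          atTop (nhds ((Real.log 2 / Real.log ((1 + Real.sqrt 5) / 2)) * 1)) :=
        tendsto_const_nhds.mul h1
      rw [mul_one] at h4
      apply h4.congr'
      filter_upwards [eventually_ge_atTop 3] with n hn
      have hge : (3 : ℝ) ≤ (n : ℝ) := by exact_mod_cast hn
      have hne : (n : ℝ) - 2 ≠ 0 := by linarith
      rw [hu]
      field_simp
    exact le_of_tendsto_of_tendsto hcomp hulim hbound
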